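/- Let D be a real symmetric positive definite n×n matrix, let H be an n×n real matrix, and let ρ ∈ (0, 1/2] and ν > 0 satisfy ‖H‖_D ≤ (1−ρ)² and ν ≤ ρ/2. Let (x⁽ᵏ⁾)_{k≥0} be a sequence in ℝⁿ with ‖x⁽ᵏ⁺¹⁾ − H·x⁽ᵏ⁾‖_D ≤ ν·‖H·x⁽ᵏ⁾‖_D for all k ≥ 0. Then Σ_{k=0}^∞ ‖x⁽ᵏ⁾ − H^k·x⁽⁰⁾‖_D ≤ 4·ρ^{−2}·ν·‖x⁽⁰⁾‖_D. -/

import Mathlib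

open Matrix

/-- The `D`-norm `‖x‖_D = √(xᵀ D x)` on `ℝⁿ`. -/
noncomputable def vecBNorm {n : ℕ} (D : Matrix (Fin n) (Fin n) ℝ) (x : Fin n → ℝ) : ℝ :=
  Real.sqrt (x ⬝ᵥ D.mulVec x)

/-- The operator norm induced by the `D`-norm: `‖M‖_D = max_{x ≠ 0} ‖Mx‖_D / ‖x‖_D`. -/
noncomputable def matBNorm {n : ℕ} (D M : Matrix (Fin n) (Fin n) ℝ) : ℝ :=
  ⨆ x : {x : Fin n → ℝ // x ≠ 0}, vecBNorm D (M.mulVec x.1) / vecBNorm D x.1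

section aux
variable {n : ℕ} {D : Matrix (Fin n) (Fin n) ℝ}
open scoped MatrixOrder

lemma vecBNorm_eq (hD : D.PosDef) (x : Fin n → ℝ) :
    vecBNorm D x = ‖(EuclideanSpace.equiv (Fin n) ℝ).symm (CFC.sqrt D *ᵥ x)‖ := by
  set S := CFC.sqrt D with hSdef
  have hS : S * S = D := CFC.sqrt_mul_sqrt_self D hD.posSemidef.nonneg
  have hsym : Sᵀ = S := by
    have := (CFC.sqrt_nonneg D).posSemidef.isHermitian
    rw [← conjTranspose_eq_transpose_of_trivial]; exact this
  have hvm : x ᵥ* S = S *ᵥ x := by rw [← hsym, vecMul_transpose, hsym]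
  have key : x ⬝ᵥ D.mulVec x = (S *ᵥ x) ⬝ᵥ (S *ᵥ x) := by
    rw [← hS, ← mulVec_mulVec, dotProduct_mulVec, hvm]
  rw [vecBNorm, key, EuclideanSpace.norm_eq]
  simp [dotProduct, Real.norm_eq_abs, sq_abs, sq]

lemma vecBNorm_nonneg (x : Fin n → ℝ) : 0 ≤ vecBNorm D x := Real.sqrt_nonneg _

lemma vecBNorm_pos (hD : D.PosDef) {x : Fin n → ℝ} (hx : x ≠ 0) : 0 < vecBNorm D x := by
  apply Real.sqrt_pos.mpr
  simpa using hD.dotProduct_mulVec_pos hx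

lemma vecBNorm_add_le (hD : D.PosDef) (y z : Fin n → ℝ) :
    vecBNorm D (y + z) ≤ vecBNorm D y + vecBNorm D z := by
  rw [vecBNorm_eq hD, vecBNorm_eq hD, vecBNorm_eq hD, mulVec_add, map_add]
  exact norm_add_le _ _

open scoped Matrix.Norms.L2Operator in
lemma vecBNorm_mulVec_le (hD : D.PosDef) (M : Matrix (Fin n) (Fin n) ℝ) (x : Fin n → ℝ) :
    vecBNorm D (M *ᵥ x) ≤ max (matBNorm D M) 0 * vecBNorm D x := by
  set S := CFC.sqrt D with hSdef
  have hS : S * S = D := CFC.sqrt_mul_sqrt_self D hD.posSemidef.nonneg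
  have hdet : IsUnit S.det := by
    have : IsUnit (S.det * S.det) := by
      rw [← det_mul, hS]; exact hD.isUnit.map detMonoidHom
    exact isUnit_of_mul_isUnit_left this
  set C : ℝ := ‖S * M * S⁻¹‖ with hCdef
  have hub : ∀ z : {x : Fin n → ℝ // x ≠ 0},
      vecBNorm D (M *ᵥ z.1) / vecBNorm D z.1 ≤ C := by
    rintro ⟨z, hz⟩
    have h1 : vecBNorm D (M *ᵥ z) ≤ C * vecBNorm D z := by
      rw [vecBNorm_eq hD, vecBNorm_eq hD]
      have h2 := (S * M * S⁻¹).l2_opNorm_mulVec ((EuclideanSpace.equiv (Fin n) ℝ).symm (S *ᵥ z))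
      calc ‖(EuclideanSpace.equiv (Fin n) ℝ).symm (S *ᵥ (M *ᵥ z))‖
          = ‖(EuclideanSpace.equiv (Fin n) ℝ).symm ((S * M * S⁻¹) *ᵥ
              ((EuclideanSpace.equiv (Fin n) ℝ) ((EuclideanSpace.equiv (Fin n) ℝ).symm (S *ᵥ z))))‖ := by
            rw [ContinuousLinearEquiv.apply_symm_apply, mulVec_mulVec, mulVec_mulVec,
              mul_assoc, mul_assoc, nonsing_inv_mul S hdet, mul_one]
        _ ≤ C * ‖(EuclideanSpace.equiv (Fin n) ℝ).symm (S *ᵥ z)‖ := h2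
    exact (div_le_iff₀ (vecBNorm_pos hD hz)).mpr h1
  have hbdd : BddAbove (Set.range fun z : {x : Fin n → ℝ // x ≠ 0} =>
      vecBNorm D (M *ᵥ z.1) / vecBNorm D z.1) :=
    ⟨C, by rintro _ ⟨z, rfl⟩; exact hub z⟩
  rcases eq_or_ne x 0 with rfl | hx
  · simp [vecBNorm, mulVec_zero, le_max_iff]
  · have hle : vecBNorm D (M *ᵥ x) / vecBNorm D x ≤ matBNorm D M :=
      le_ciSup hbdd (⟨x, hx⟩ : {x : Fin n → ℝ // x ≠ 0})
    have hpx := vecBNorm_pos hD hx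
    calc vecBNorm D (M *ᵥ x) = vecBNorm D (M *ᵥ x) / vecBNorm D x * vecBNorm D x := by
          field_simp
      _ ≤ max (matBNorm D M) 0 * vecBNorm D x := by
          apply mul_le_mul_of_nonneg_right _ hpx.le
          exact le_max_of_le_left hle

end aux

/-- cumulative error of a `ν`-approximate power sequence of a `D`-norm
contraction `H` with `‖H‖_D ≤ (1-ρ)²`, `ρ ∈ (0,1/2]`, `ν ≤ ρ/2`:
`Σ_k ‖x⁽ᵏ⁾ - Hᵏ x⁽⁰⁾‖_D ≤ 4 ρ⁻² ν ‖x⁽⁰⁾‖_D`. -/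
theorem approximate_power_sequence_total_error
    {n : ℕ} (D : Matrix (Fin n) (Fin n) ℝ) (hD : D.PosDef)
    (H : Matrix (Fin n) (Fin n) ℝ) (ρ ν : ℝ)
    (hρ : ρ ∈ Set.Ioc (0 : ℝ) (1 / 2)) (hν : 0 < ν)
    (hH : matBNorm D H ≤ (1 - ρ) ^ 2) (hνρ : ν ≤ ρ / 2)
    (x : ℕ → Fin n → ℝ)
    (hx : ∀ k : ℕ, vecBNorm D (x (k + 1) - H.mulVec (x k)) ≤ ν * vecBNorm D (H.mulVec (x k))) :
    Summable (fun k : ℕ => vecBNorm D (x k - (H ^ k).mulVec (x 0))) ∧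
    ∑' k : ℕ, vecBNorm D (x k - (H ^ k).mulVec (x 0)) ≤ 4 * ρ⁻¹ ^ 2 * ν * vecBNorm D (x 0) := by
  obtain ⟨hρ0, hρ2⟩ := hρ
  set q := max (matBNorm D H) 0 with hqdef
  have hq0 : 0 ≤ q := le_max_right _ _
  have hqle : q ≤ (1 - ρ) ^ 2 := max_le hH (by positivity)
  set a := (1 + ν) * q with hadef
  have ha0 : 0 ≤ a := by nlinarith
  have ha1 : a ≤ 1 - ρ := by
    have h1 : a ≤ (1 + ν) * (1 - ρ) ^ 2 := by nlinarith
    have h2 : (1 + ν) * (1 - ρ) ^ 2 ≤ (1 + ρ / 2) * (1 - ρ) ^ 2 := by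
      nlinarith [sq_nonneg (1 - ρ)]
    have hsq : ρ ^ 2 ≤ 1 := by nlinarith
    have hcube : ρ ^ 3 ≤ ρ := by nlinarith
    have h3 : (1 + ρ / 2) * (1 - ρ) ^ 2 ≤ 1 - ρ := by nlinarith
    linarith
  have haq : q ≤ a := by nlinarith
  set X := vecBNorm D (x 0) with hXdef
  have hX0 : 0 ≤ X := vecBNorm_nonneg _
  have hmul : ∀ y, vecBNorm D (H *ᵥ y) ≤ q * vecBNorm D y := vecBNorm_mulVec_le hD H
  have hpow : ∀ k, vecBNorm D ((H ^ k) *ᵥ (x 0)) ≤ q ^ k * X := by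
    intro k; induction k with
    | zero => simp [X]
    | succ k ih =>
      rw [pow_succ', ← mulVec_mulVec]
      calc vecBNorm D (H *ᵥ ((H ^ k) *ᵥ x 0)) ≤ q * vecBNorm D ((H ^ k) *ᵥ x 0) := hmul _
        _ ≤ q * (q ^ k * X) := mul_le_mul_of_nonneg_left ih hq0
        _ = q ^ (k + 1) * X := by ring
  set e := fun k => vecBNorm D (x k - (H ^ k) *ᵥ x 0) with hedef
  have he0 : e 0 = 0 := by simp [hedef, vecBNorm]
  have hen : ∀ k, 0 ≤ e k := fun k => vecBNorm_nonneg _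
  have hrec : ∀ k, e (k + 1) ≤ a * e k + ν * q ^ (k + 1) * X := by
    intro k
    have split : x (k + 1) - (H ^ (k + 1)) *ᵥ x 0
        = (x (k + 1) - H *ᵥ x k) + H *ᵥ (x k - (H ^ k) *ᵥ x 0) := by
      rw [pow_succ', ← mulVec_mulVec, mulVec_sub]
      abel
    have t1 : e (k + 1) ≤ vecBNorm D (x (k + 1) - H *ᵥ x k)
        + vecBNorm D (H *ᵥ (x k - (H ^ k) *ᵥ x 0)) := by
      rw [hedef]; dsimp only; rw [split]; exact vecBNorm_add_le hD _ _
    have t2 := hx k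
    have t3 : vecBNorm D (H *ᵥ x k) ≤ q * vecBNorm D (x k) := hmul _
    have t4 : vecBNorm D (x k) ≤ e k + q ^ k * X := by
      have hxk : x k = (x k - (H ^ k) *ᵥ x 0) + (H ^ k) *ᵥ x 0 := by abel
      calc vecBNorm D (x k) = vecBNorm D ((x k - (H ^ k) *ᵥ x 0) + (H ^ k) *ᵥ x 0) := by
            rw [← hxk]
        _ ≤ e k + vecBNorm D ((H ^ k) *ᵥ x 0) := vecBNorm_add_le hD _ _
        _ ≤ e k + q ^ k * X := by linarith [hpow k]
    have t5 : vecBNorm D (H *ᵥ (x k - (H ^ k) *ᵥ x 0)) ≤ q * e k := hmul _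
    have t6 : ν * vecBNorm D (H *ᵥ x k) ≤ ν * (q * (e k + q ^ k * X)) := by
      apply mul_le_mul_of_nonneg_left _ hν.le
      calc vecBNorm D (H *ᵥ x k) ≤ q * vecBNorm D (x k) := t3
        _ ≤ q * (e k + q ^ k * X) := mul_le_mul_of_nonneg_left t4 hq0
    calc e (k + 1) ≤ vecBNorm D (x (k + 1) - H *ᵥ x k)
        + vecBNorm D (H *ᵥ (x k - (H ^ k) *ᵥ x 0)) := t1
      _ ≤ ν * vecBNorm D (H *ᵥ x k) + q * e k := by linarith
      _ ≤ ν * (q * (e k + q ^ k * X)) + q * e k := by linarith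
      _ = a * e k + ν * (q * q ^ k) * X := by rw [hadef]; ring
      _ = a * e k + ν * q ^ (k + 1) * X := by rw [← pow_succ']
  have hbd : ∀ k, e k ≤ ν * X * (k * a ^ k) := by
    intro k; induction k with
    | zero => simp [he0]
    | succ k ih =>
      have hq' : q ^ (k + 1) ≤ a ^ (k + 1) := pow_le_pow_left₀ hq0 haq _
      calc e (k + 1) ≤ a * e k + ν * q ^ (k + 1) * X := hrec k
        _ ≤ a * (ν * X * (k * a ^ k)) + ν * a ^ (k + 1) * X := by
            have := mul_le_mul_of_nonneg_left ih ha0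
            have h2 : ν * q ^ (k + 1) * X ≤ ν * a ^ (k + 1) * X := by
              apply mul_le_mul_of_nonneg_right _ hX0
              exact mul_le_mul_of_nonneg_left hq' hν.le
            linarith
        _ = ν * X * ((k + 1 : ℕ) * a ^ (k + 1)) := by push_cast; ring
  have hanorm : ‖a‖ < 1 := by rw [Real.norm_eq_abs, abs_of_nonneg ha0]; linarith
  have hs1 : Summable (fun k : ℕ => (k : ℝ) * a ^ k) := by
    simpa using summable_pow_mul_geometric_of_norm_lt_one 1 hanorm
  have hs2 : Summable (fun k : ℕ => ν * X * ((k : ℝ) * a ^ k)) := hs1.mul_left _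
  have hsum : Summable e := Summable.of_nonneg_of_le hen hbd hs2
  refine ⟨hsum, ?_⟩
  have htsum : ∑' k, e k ≤ ∑' k : ℕ, ν * X * ((k : ℝ) * a ^ k) := Summable.tsum_le_tsum hbd hsum hs2
  have hgeo : ∑' k : ℕ, (k : ℝ) * a ^ k = a / (1 - a) ^ 2 :=
    tsum_coe_mul_geometric_of_norm_lt_one hanorm
  rw [tsum_mul_left, hgeo] at htsum
  have h1a : ρ ≤ 1 - a := by linarith
  have hfrac : a / (1 - a) ^ 2 ≤ 4 / ρ ^ 2 := by
    apply div_le_div₀ (by norm_num) (by linarith) (by positivity)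
    exact pow_le_pow_left₀ hρ0.le h1a 2
  calc ∑' k, e k ≤ ν * X * (a / (1 - a) ^ 2) := htsum
    _ ≤ ν * X * (4 / ρ ^ 2) := mul_le_mul_of_nonneg_left hfrac (by positivity)
    _ = 4 * ρ⁻¹ ^ 2 * ν * X := by field_simp
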